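/- arXiv:1201.5035 — 3 statements merged into one kernel-verified Lean document; each statement's English description precedes it below -/
import Mathlib

section
/- Let Y be a topological groupoid acting on the left of a locally compact Hausdorff space Ω with fibre map q : Ω → Y⁰, and suppose q is a principal H-bundle for a locally compact Hausdorff topological group H acting continuously, freely and properly on the right of Ω (meaning that q(u) = q(v) if and only if u·H = v·H, so q induces a homeomorphism Ω/H ≅ Y⁰). Assume the actions of Y and H on Ω commute: y·(u·h) = (y·u)·h whenever s(y) = q(u). Then H acts freely and properly on the right of the transformation groupoid Y*Ω by automorphisms, via (y,u)·h = (y, u·h). In particular, the first-coordinate projection π₁ : Y*Ω → Y is a principal H-bundle: the H-orbits in Y*Ω are exactly the fibres of π₁, and π₁ induces a homeomorphism (Y*Ω)/H ≅ Y. -/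
open MeasureTheory Filter Topology

/-- A topological groupoid: a space `Γ` with a set of units, continuous open range and
source maps onto the units, a (partially meaningful, totalized) continuous multiplication
defined for composable pairs, and a continuous inversion. -/
structure TopGroupoid (Γ : Type*) [TopologicalSpace Γ] where
  unit : Set Γ
  rng : Γ → Γ
  src : Γ → Γ
  mul : Γ → Γ → Γ
  inv : Γ → Γ
  rng_mem : ∀ x, rng x ∈ unit
  src_mem : ∀ x, src x ∈ unit
  rng_unit : ∀ u ∈ unit, rng u = u
  src_unit : ∀ u ∈ unit, src u = u
  continuous_rng : Continuous rng
  continuous_src : Continuous src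
  open_rng : ∀ U : Set Γ, IsOpen U → ∃ V : Set Γ, IsOpen V ∧ rng '' U = V ∩ unit
  open_src : ∀ U : Set Γ, IsOpen U → ∃ V : Set Γ, IsOpen V ∧ src '' U = V ∩ unit
  continuous_mul : ContinuousOn (fun p : Γ × Γ => mul p.1 p.2) {p : Γ × Γ | src p.1 = rng p.2}
  continuous_inv : Continuous inv
  rng_mul : ∀ x y, src x = rng y → rng (mul x y) = rng x
  src_mul : ∀ x y, src x = rng y → src (mul x y) = src y
  mul_assoc' : ∀ x y z, src x = rng y → src y = rng z → mul (mul x y) z = mul x (mul y z)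
  rng_mul_self : ∀ x, mul (rng x) x = x
  mul_src_self : ∀ x, mul x (src x) = x
  inv_inv' : ∀ x, inv (inv x) = x
  src_inv : ∀ x, src (inv x) = rng x
  rng_inv : ∀ x, rng (inv x) = src x
  inv_mul' : ∀ x, mul (inv x) x = src x
  mul_inv' : ∀ x, mul x (inv x) = rng x

section Actions

variable {Γ : Type*} [TopologicalSpace Γ]

/-- A (continuous) right action of a group `H` on a topological groupoid by automorphisms. -/
structure GroupRightAction (𝒢 : TopGroupoid Γ) (H : Type*) [TopologicalSpace H] [Group H] where
  act : Γ → H → Γ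
  continuous_act : Continuous fun p : Γ × H => act p.1 p.2
  act_one : ∀ x, act x 1 = x
  act_mul : ∀ x (h k : H), act (act x h) k = act x (h * k)
  unit_act : ∀ u ∈ 𝒢.unit, ∀ h : H, act u h ∈ 𝒢.unit
  src_act : ∀ x h, 𝒢.src (act x h) = act (𝒢.src x) h
  rng_act : ∀ x h, 𝒢.rng (act x h) = act (𝒢.rng x) h
  mul_act : ∀ x y h, 𝒢.src x = 𝒢.rng y → 𝒢.mul (act x h) (act y h) = act (𝒢.mul x y) h
  inv_act : ∀ x h, 𝒢.inv (act x h) = act (𝒢.inv x) h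

namespace GroupRightAction

variable {𝒢 : TopGroupoid Γ} {H : Type*} [TopologicalSpace H] [Group H]

/-- The action is free. -/
def Free (A : GroupRightAction 𝒢 H) : Prop := ∀ x h, A.act x h = x → h = 1

/-- The action is proper: `(x,h) ↦ (x·h, x)` has compact preimages of compact sets. -/
def Proper (A : GroupRightAction 𝒢 H) : Prop :=
  ∀ K : Set (Γ × Γ), IsCompact K → IsCompact {p : Γ × H | (A.act p.1 p.2, p.1) ∈ K}

/-- The orbit equivalence relation. -/
def setoid (A : GroupRightAction 𝒢 H) : Setoid Γ where
  r x y := ∃ h : H, A.act x h = y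
  iseqv := by
    refine ⟨fun x => ⟨1, A.act_one x⟩, ?_, ?_⟩
    · rintro x y ⟨h, rfl⟩
      exact ⟨h⁻¹, by rw [A.act_mul]; simp [A.act_one]⟩
    · rintro x y z ⟨h, rfl⟩ ⟨k, rfl⟩
      exact ⟨h * k, (A.act_mul x h k).symm⟩

end GroupRightAction

/-- A (continuous) left action of a group `G` on a topological groupoid by automorphisms. -/
structure GroupLeftAction (𝒢 : TopGroupoid Γ) (G : Type*) [TopologicalSpace G] [Group G] where
  act : G → Γ → Γ
  continuous_act : Continuous fun p : G × Γ => act p.1 p.2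
  one_act : ∀ x, act 1 x = x
  act_act : ∀ (t u : G) (x : Γ), act t (act u x) = act (t * u) x
  unit_act : ∀ u ∈ 𝒢.unit, ∀ t : G, act t u ∈ 𝒢.unit
  src_act : ∀ t x, 𝒢.src (act t x) = act t (𝒢.src x)
  rng_act : ∀ t x, 𝒢.rng (act t x) = act t (𝒢.rng x)
  mul_act : ∀ t x y, 𝒢.src x = 𝒢.rng y → 𝒢.mul (act t x) (act t y) = act t (𝒢.mul x y)
  inv_act : ∀ t x, 𝒢.inv (act t x) = act t (𝒢.inv x)

namespace GroupLeftAction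

variable {𝒢 : TopGroupoid Γ} {G : Type*} [TopologicalSpace G] [Group G]

/-- The action is free. -/
def Free (A : GroupLeftAction 𝒢 G) : Prop := ∀ t x, A.act t x = x → t = 1

/-- The action is proper: `(t,x) ↦ (t·x, x)` has compact preimages of compact sets. -/
def Proper (A : GroupLeftAction 𝒢 G) : Prop :=
  ∀ K : Set (Γ × Γ), IsCompact K → IsCompact {p : G × Γ | (A.act p.1 p.2, p.2) ∈ K}

/-- The orbit equivalence relation. -/
def setoid (A : GroupLeftAction 𝒢 G) : Setoid Γ where
  r x y := ∃ t : G, A.act t x = y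
  iseqv := by
    refine ⟨fun x => ⟨1, A.one_act x⟩, ?_, ?_⟩
    · rintro x y ⟨t, rfl⟩
      exact ⟨t⁻¹, by rw [A.act_act]; simp [A.one_act]⟩
    · rintro x y z ⟨t, rfl⟩ ⟨u, rfl⟩
      exact ⟨u * t, (A.act_act u t x).symm⟩

end GroupLeftAction

/-- A left action of a topological groupoid `𝒢` on a space `Ω`, with fibre map `ρ`. -/
structure GroupoidLeftAction (𝒢 : TopGroupoid Γ) (Ω : Type*) [TopologicalSpace Ω] where
  ρ : Ω → Γ
  act : Γ → Ω → Ω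
  ρ_mem : ∀ u, ρ u ∈ 𝒢.unit
  continuous_ρ : Continuous ρ
  ρ_surj : ∀ v ∈ 𝒢.unit, ∃ u, ρ u = v
  open_ρ : ∀ U : Set Ω, IsOpen U → ∃ V : Set Γ, IsOpen V ∧ ρ '' U = V ∩ 𝒢.unit
  continuous_act : ContinuousOn (fun p : Γ × Ω => act p.1 p.2) {p : Γ × Ω | 𝒢.src p.1 = ρ p.2}
  ρ_act : ∀ x u, 𝒢.src x = ρ u → ρ (act x u) = 𝒢.rng x
  unit_act : ∀ u, act (ρ u) u = u
  act_act : ∀ x y u, 𝒢.src y = ρ u → 𝒢.src x = 𝒢.rng y → act x (act y u) = act (𝒢.mul x y) u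

namespace GroupoidLeftAction

variable {𝒢 : TopGroupoid Γ} {Ω : Type*} [TopologicalSpace Ω]

/-- The action is free. -/
def Free (A : GroupoidLeftAction 𝒢 Ω) : Prop :=
  ∀ x u, 𝒢.src x = A.ρ u → A.act x u = u → x ∈ 𝒢.unit

/-- The action is proper: `(x,u) ↦ (x·u, u)` on the composable set has compact preimages of
compact sets. -/
def Proper (A : GroupoidLeftAction 𝒢 Ω) : Prop :=
  ∀ K : Set (Ω × Ω), IsCompact K →
    IsCompact {p : Γ × Ω | 𝒢.src p.1 = A.ρ p.2 ∧ (A.act p.1 p.2, p.2) ∈ K}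

/-- The orbit equivalence relation on `Ω`. -/
def setoid (A : GroupoidLeftAction 𝒢 Ω) : Setoid Ω where
  r u v := ∃ x, 𝒢.src x = A.ρ u ∧ A.act x u = v
  iseqv := by
    constructor
    · exact fun u => ⟨A.ρ u, 𝒢.src_unit _ (A.ρ_mem u), A.unit_act u⟩
    · rintro u v ⟨x, hx, rfl⟩
      refine ⟨𝒢.inv x, ?_, ?_⟩
      · rw [𝒢.src_inv, A.ρ_act x u hx]
      · rw [A.act_act _ x u hx (𝒢.src_inv x), 𝒢.inv_mul', hx, A.unit_act]
    · rintro u v w ⟨x, hx, rfl⟩ ⟨y, hy, rfl⟩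
      have hyr : 𝒢.src y = 𝒢.rng x := by rw [hy, A.ρ_act x u hx]
      refine ⟨𝒢.mul y x, ?_, ?_⟩
      · rw [𝒢.src_mul y x hyr, hx]
      · rw [← A.act_act y x u hx hyr]

end GroupoidLeftAction

/-- A right action of a topological groupoid `𝒢` on a space `Ω`, with fibre map `σ`. -/
structure GroupoidRightAction (𝒢 : TopGroupoid Γ) (Ω : Type*) [TopologicalSpace Ω] where
  σ : Ω → Γ
  act : Ω → Γ → Ω
  σ_mem : ∀ u, σ u ∈ 𝒢.unit
  continuous_σ : Continuous σ
  σ_surj : ∀ v ∈ 𝒢.unit, ∃ u, σ u = v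
  open_σ : ∀ U : Set Ω, IsOpen U → ∃ V : Set Γ, IsOpen V ∧ σ '' U = V ∩ 𝒢.unit
  continuous_act : ContinuousOn (fun p : Ω × Γ => act p.1 p.2) {p : Ω × Γ | σ p.1 = 𝒢.rng p.2}
  σ_act : ∀ u x, σ u = 𝒢.rng x → σ (act u x) = 𝒢.src x
  unit_act : ∀ u, act u (σ u) = u
  act_act : ∀ u x y, σ u = 𝒢.rng x → 𝒢.src x = 𝒢.rng y → act (act u x) y = act u (𝒢.mul x y)

namespace GroupoidRightAction

variable {𝒢 : TopGroupoid Γ} {Ω : Type*} [TopologicalSpace Ω]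

/-- The action is free. -/
def Free (A : GroupoidRightAction 𝒢 Ω) : Prop :=
  ∀ u x, A.σ u = 𝒢.rng x → A.act u x = u → x ∈ 𝒢.unit

/-- The action is proper. -/
def Proper (A : GroupoidRightAction 𝒢 Ω) : Prop :=
  ∀ K : Set (Ω × Ω), IsCompact K →
    IsCompact {p : Ω × Γ | A.σ p.1 = 𝒢.rng p.2 ∧ (A.act p.1 p.2, p.1) ∈ K}

/-- The orbit equivalence relation on `Ω`. -/
def setoid (A : GroupoidRightAction 𝒢 Ω) : Setoid Ω where
  r u v := ∃ x, A.σ u = 𝒢.rng x ∧ A.act u x = v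
  iseqv := by
    constructor
    · exact fun u => ⟨A.σ u, (𝒢.rng_unit _ (A.σ_mem u)).symm, A.unit_act u⟩
    · rintro u v ⟨x, hx, rfl⟩
      refine ⟨𝒢.inv x, ?_, ?_⟩
      · rw [𝒢.rng_inv, A.σ_act u x hx]
      · rw [A.act_act u x _ hx (𝒢.rng_inv x).symm, 𝒢.mul_inv', ← hx, A.unit_act]
    · rintro u v w ⟨x, hx, rfl⟩ ⟨y, hy, rfl⟩
      have hxy : 𝒢.src x = 𝒢.rng y := by rw [← A.σ_act u x hx, hy]
      refine ⟨𝒢.mul x y, ?_, ?_⟩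
      · rw [𝒢.rng_mul x y hxy, hx]
      · rw [A.act_act u x y hx hxy]

end GroupoidRightAction

end Actions

/-- A left Haar system on a topological groupoid: a family of Radon measures indexed by the
units, with support `r⁻¹(u)`, continuous in `u`, and left invariant. -/
def IsHaarSystem {Γ : Type*} [TopologicalSpace Γ] [MeasurableSpace Γ]
    (𝒢 : TopGroupoid Γ) (lam : Γ → Measure Γ) : Prop :=
  (∀ u ∈ 𝒢.unit, ∀ K : Set Γ, IsCompact K → lam u K < ⊤) ∧
  (∀ u ∈ 𝒢.unit, lam u {x | 𝒢.rng x ≠ u} = 0) ∧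
  (∀ u ∈ 𝒢.unit, ∀ V : Set Γ, IsOpen V → (V ∩ 𝒢.rng ⁻¹' {u}).Nonempty → 0 < lam u V) ∧
  (∀ f : Γ → ℝ, Continuous f → HasCompactSupport f →
    ContinuousOn (fun u => ∫ x, f x ∂(lam u)) 𝒢.unit) ∧
  (∀ x : Γ, ∀ f : Γ → ℝ, Continuous f → HasCompactSupport f →
    ∫ y, f (𝒢.mul x y) ∂(lam (𝒢.src x)) = ∫ y, f y ∂(lam (𝒢.rng x)))

private theorem pi1_isOpenMap {Y Ω : Type*} [TopologicalSpace Y] [TopologicalSpace Ω]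
    {𝒴 : TopGroupoid Y} (A : GroupoidLeftAction 𝒴 Ω) :
    ∀ W : Set {p : Y × Ω // 𝒴.src p.1 = A.ρ p.2}, IsOpen W →
      IsOpen ((fun z : {p : Y × Ω // 𝒴.src p.1 = A.ρ p.2} => z.val.1) '' W) := by
  intro W hW
  rw [isOpen_iff_forall_mem_open]
  rintro y ⟨z, hzW, rfl⟩
  obtain ⟨O, hO, hOW⟩ := isOpen_induced_iff.mp hW
  have hzO : z.val ∈ O := by rw [← hOW] at hzW; exact hzW
  obtain ⟨V₁, V₂, hV₁, hV₂, hz1, hz2, hsub⟩ := isOpen_prod_iff.mp hO z.val.1 z.val.2 hzO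
  obtain ⟨V, hV, hVeq⟩ := A.open_ρ V₂ hV₂
  refine ⟨V₁ ∩ 𝒴.src ⁻¹' V, ?_, hV₁.inter (hV.preimage 𝒴.continuous_src), hz1, ?_⟩
  · rintro y' ⟨hy1, hy2⟩
    have hmem : 𝒴.src y' ∈ A.ρ '' V₂ := by rw [hVeq]; exact ⟨hy2, 𝒴.src_mem y'⟩
    obtain ⟨u, hu, huy⟩ := hmem
    refine ⟨⟨(y', u), huy.symm⟩, ?_, rfl⟩
    rw [← hOW]
    exact hsub ⟨hy1, hu⟩
  · have hmem : A.ρ z.val.2 ∈ A.ρ '' V₂ := ⟨z.val.2, hz2, rfl⟩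
    rw [hVeq] at hmem
    show 𝒴.src z.val.1 ∈ V
    rw [z.prop]; exact hmem.1

private theorem exists_quotient_homeo {Y Ω H : Type*} [TopologicalSpace Y] [TopologicalSpace Ω]
    [TopologicalSpace H] [Group H]
    {𝒴 : TopGroupoid Y} {A : GroupoidLeftAction 𝒴 Ω}
    {TG : TopGroupoid {p : Y × Ω // 𝒴.src p.1 = A.ρ p.2}}
    (B : GroupRightAction TG H)
    (horb : ∀ z z', (∃ h : H, B.act z h = z') ↔ z.val.1 = z'.val.1) :
    ∃ φ : Quotient B.setoid ≃ₜ Y,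
      ∀ z, φ (Quotient.mk B.setoid z) = z.val.1 := by
  have resp : ∀ a b, B.setoid.r a b → a.val.1 = b.val.1 := fun a b hab => (horb a b).mp hab
  let F : Quotient B.setoid → Y := Quotient.lift (fun z => z.val.1) resp
  have hbij : Function.Bijective F := by
    constructor
    · intro a b
      obtain ⟨x, rfl⟩ := Quotient.exists_rep a
      obtain ⟨y, rfl⟩ := Quotient.exists_rep b
      intro hab
      exact Quotient.sound ((horb _ _).mpr hab)
    · intro y
      obtain ⟨u, hu⟩ := A.ρ_surj (𝒴.src y) (𝒴.src_mem y)
      exact ⟨Quotient.mk B.setoid ⟨(y, u), hu.symm⟩, rfl⟩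
  have hcont : Continuous F :=
    Continuous.quotient_lift continuous_subtype_val.fst resp
  have hopen : IsOpenMap F := by
    intro U hU
    have hpre : IsOpen (Quotient.mk B.setoid ⁻¹' U) := hU.preimage continuous_quot_mk
    have himg : F '' U = (fun z : {p : Y × Ω // 𝒴.src p.1 = A.ρ p.2} => z.val.1) ''
        (Quotient.mk B.setoid ⁻¹' U) := by
      ext y
      constructor
      · rintro ⟨q, hq, rfl⟩
        obtain ⟨z, rfl⟩ := Quotient.exists_rep q
        exact ⟨z, hq, rfl⟩
      · rintro ⟨z, hz, rfl⟩
        exact ⟨Quotient.mk B.setoid z, hz, rfl⟩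
    rw [himg]
    exact pi1_isOpenMap A _ hpre
  exact ⟨Equiv.toHomeomorphOfContinuousOpen (Equiv.ofBijective F hbij) hcont hopen,
    fun z => rfl⟩

/-- If the fibre map of an action of a groupoid `Y` on `Ω` is a principal
`H`-bundle and the actions of `Y` and `H` commute, then `H` acts freely and properly by
automorphisms on the transformation groupoid `Y*Ω` via `(y,u)·h = (y, u·h)`, and the
first-coordinate projection is a principal `H`-bundle inducing `(Y*Ω)/H ≅ Y`. -/
theorem group_acts_on_transformation_groupoid
    {Y Ω H : Type*} [TopologicalSpace Y] [T2Space Y] [LocallyCompactSpace Y]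
    [TopologicalSpace Ω] [T2Space Ω] [LocallyCompactSpace Ω]
    [TopologicalSpace H] [Group H] [IsTopologicalGroup H] [T2Space H] [LocallyCompactSpace H]
    (𝒴 : TopGroupoid Y) (A : GroupoidLeftAction 𝒴 Ω)
    (actΩ : Ω → H → Ω)
    (hcont : Continuous fun p : Ω × H => actΩ p.1 p.2)
    (hone : ∀ u, actΩ u 1 = u)
    (hmulΩ : ∀ (u : Ω) (h k : H), actΩ (actΩ u h) k = actΩ u (h * k))
    (hfree : ∀ u h, actΩ u h = u → h = 1)
    (hproper : ∀ K : Set (Ω × Ω), IsCompact K →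
      IsCompact {p : Ω × H | (actΩ p.1 p.2, p.1) ∈ K})
    (hprincipal : ∀ u v : Ω, A.ρ u = A.ρ v ↔ ∃ h : H, actΩ u h = v)
    (hcomm : ∀ (y : Y) (u : Ω) (h : H), 𝒴.src y = A.ρ u →
      A.act y (actΩ u h) = actΩ (A.act y u) h)
    (TG : TopGroupoid {p : Y × Ω // 𝒴.src p.1 = A.ρ p.2})
    (hunit : TG.unit = {z | ∃ u : Ω, z.val = (A.ρ u, u)})
    (hrng : ∀ z, (TG.rng z).val = (𝒴.rng z.val.1, A.act z.val.1 z.val.2))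
    (hsrc : ∀ z, (TG.src z).val = (𝒴.src z.val.1, z.val.2))
    (hmul : ∀ z w, 𝒴.src z.val.1 = 𝒴.rng w.val.1 → z.val.2 = A.act w.val.1 w.val.2 →
      (TG.mul z w).val = (𝒴.mul z.val.1 w.val.1, w.val.2))
    (hinv : ∀ z, (TG.inv z).val = (𝒴.inv z.val.1, A.act z.val.1 z.val.2)) :
    ∃ B : GroupRightAction TG H,
      (∀ (z : {p : Y × Ω // 𝒴.src p.1 = A.ρ p.2}) (h : H),
        (B.act z h).val = (z.val.1, actΩ z.val.2 h)) ∧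
      B.Free ∧ B.Proper ∧
      (∀ z z' : {p : Y × Ω // 𝒴.src p.1 = A.ρ p.2},
        (∃ h : H, B.act z h = z') ↔ z.val.1 = z'.val.1) ∧
      (∃ φ : Quotient B.setoid ≃ₜ Y,
        ∀ z : {p : Y × Ω // 𝒴.src p.1 = A.ρ p.2},
          φ (Quotient.mk B.setoid z) = z.val.1) := by
  set Z := {p : Y × Ω // 𝒴.src p.1 = A.ρ p.2} with hZ
  have hρact : ∀ (u : Ω) (h : H), A.ρ (actΩ u h) = A.ρ u :=
    fun u h => ((hprincipal u (actΩ u h)).mpr ⟨h, rfl⟩).symm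
  -- the action
  refine ⟨{ act := fun z h => ⟨(z.val.1, actΩ z.val.2 h), z.prop.trans (hρact _ _).symm⟩
            continuous_act := ?_
            act_one := ?_
            act_mul := ?_
            unit_act := ?_
            src_act := ?_
            rng_act := ?_
            mul_act := ?_
            inv_act := ?_ }, fun z h => rfl, ?_, ?_, ?_, ?_⟩
  · apply Continuous.subtype_mk
    exact ((continuous_subtype_val.comp continuous_fst).fst).prodMk
      (hcont.comp (((continuous_subtype_val.comp continuous_fst).snd).prodMk continuous_snd))
  · intro x; exact Subtype.ext (by simp [hone])
  · intro x h k; exact Subtype.ext (by simp [hmulΩ])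
  · intro u hu h
    rw [hunit] at hu ⊢
    obtain ⟨w, hw⟩ := hu
    exact ⟨actΩ w h, by simp [hw, hρact]⟩
  · intro x h
    apply Subtype.ext
    rw [hsrc]
    show (𝒴.src x.val.1, actΩ x.val.2 h) = ((TG.src x).val.1, actΩ (TG.src x).val.2 h)
    rw [hsrc]
  · intro x h
    apply Subtype.ext
    rw [hrng]
    show (𝒴.rng x.val.1, A.act x.val.1 (actΩ x.val.2 h))
        = ((TG.rng x).val.1, actΩ (TG.rng x).val.2 h)
    rw [hrng, hcomm _ _ _ x.prop]
  · intro x y h hxy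
    have h1 : 𝒴.src x.val.1 = 𝒴.rng y.val.1 := by
      have := congrArg (fun z : Z => z.val.1) hxy
      simpa [hsrc, hrng] using this
    have h2 : x.val.2 = A.act y.val.1 y.val.2 := by
      have := congrArg (fun z : Z => z.val.2) hxy
      simpa [hsrc, hrng] using this
    apply Subtype.ext
    have h2' : actΩ x.val.2 h = A.act y.val.1 (actΩ y.val.2 h) := by
      rw [hcomm _ _ _ y.prop, ← h2]
    have key : (TG.mul ⟨(x.val.1, actΩ x.val.2 h), x.prop.trans (hρact _ _).symm⟩
        ⟨(y.val.1, actΩ y.val.2 h), y.prop.trans (hρact _ _).symm⟩).val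
        = (𝒴.mul x.val.1 y.val.1, actΩ y.val.2 h) := hmul _ _ h1 h2'
    refine key.trans ?_
    show _ = ((TG.mul x y).val.1, actΩ (TG.mul x y).val.2 h)
    rw [hmul x y h1 h2]
  · intro x h
    apply Subtype.ext
    rw [hinv]
    show (𝒴.inv x.val.1, A.act x.val.1 (actΩ x.val.2 h))
        = ((TG.inv x).val.1, actΩ (TG.inv x).val.2 h)
    rw [hinv, hcomm _ _ _ x.prop]
  -- free
  · intro x h hx
    have := congrArg (fun z : Z => z.val.2) hx
    exact hfree _ _ this
  -- proper
  · intro K hK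
    have hK' : IsCompact ((fun p : Z × Z => (p.1.val.2, p.2.val.2)) '' K) :=
      hK.image (((continuous_subtype_val.comp continuous_fst).snd).prodMk
        ((continuous_subtype_val.comp continuous_snd).snd))
    have hP := hproper _ hK'
    have hQ : IsCompact ((fun p : Ω × H => p.2) '' {p : Ω × H |
        (actΩ p.1 p.2, p.1) ∈ (fun p : Z × Z => (p.1.val.2, p.2.val.2)) '' K}) :=
      hP.image continuous_snd
    have hK2 : IsCompact (Prod.snd '' K) := hK.image continuous_snd
    apply IsCompact.of_isClosed_subset (hK2.prod hQ)
    · have hKc : IsClosed K := hK.isClosed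
      have : Continuous fun p : Z × H =>
          ((⟨(p.1.val.1, actΩ p.1.val.2 p.2), p.1.prop.trans (hρact _ _).symm⟩ : Z), p.1) := by
        refine Continuous.prodMk ?_ continuous_fst
        apply Continuous.subtype_mk
        exact ((continuous_subtype_val.comp continuous_fst).fst).prodMk
          (hcont.comp (((continuous_subtype_val.comp continuous_fst).snd).prodMk continuous_snd))
      exact hKc.preimage this
    · rintro ⟨z, h⟩ hzh
      refine ⟨⟨_, hzh, rfl⟩, ⟨(z.val.2, h), ?_, rfl⟩⟩
      exact ⟨_, hzh, rfl⟩
  -- orbits = fibres of π₁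
  · intro z z'
    constructor
    · rintro ⟨h, rfl⟩; rfl
    · intro h1
      have : A.ρ z.val.2 = A.ρ z'.val.2 := by
        rw [← z.prop, ← z'.prop, h1]
      obtain ⟨h, hh⟩ := (hprincipal _ _).mp this
      exact ⟨h, Subtype.ext (Prod.ext h1 hh)⟩
  -- homeomorphism
  · apply exists_quotient_homeo
    intro z z'
    constructor
    · rintro ⟨h, rfl⟩; rfl
    · intro h1
      have heq : A.ρ z.val.2 = A.ρ z'.val.2 := by
        rw [← z.prop, ← z'.prop, h1]
      obtain ⟨h, hh⟩ := (hprincipal _ _).mp heq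
      exact ⟨h, Subtype.ext (Prod.ext h1 hh)⟩
end

section
/- Let H be a locally compact Hausdorff topological group acting freely and properly on the right of a topological groupoid Γ by automorphisms, let Γ/H be the quotient groupoid with quotient map q : Γ → Γ/H, and let q₀ : Γ⁰ → Γ⁰/H be the restriction of q to units. Then there is a unique left action of the groupoid Γ/H on the space Γ⁰, with fibre map q₀, satisfying (xH)·s(x) = r(x) for all x ∈ Γ; and with respect to this action the map θ : Γ → (Γ/H)*Γ⁰ defined by θ(x) = (xH, s(x)) is an H-equivariant isomorphism of topological groupoids from Γ onto the transformation groupoid (Γ/H)*Γ⁰, where H acts on (Γ/H)*Γ⁰ by (z,u)·h = (z, u·h). That is, θ is a homeomorphism, θ(xy) = θ(x)θ(y) whenever s(x) = r(y), and θ(x·h) = θ(x)·h for all h ∈ H. -/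
open MeasureTheory Filter Topology

set_option linter.unusedSectionVars false

section PGSAux

variable {Γ H : Type*} [TopologicalSpace Γ] [T2Space Γ] [LocallyCompactSpace Γ]
  [TopologicalSpace H] [Group H] [IsTopologicalGroup H] [T2Space H] [LocallyCompactSpace H]
  {𝒢 : TopGroupoid Γ} (RA : GroupRightAction 𝒢 H)

lemma PGS.mk_eq_iff {x y : Γ} :
    Quotient.mk RA.setoid x = Quotient.mk RA.setoid y ↔ ∃ h : H, RA.act x h = y :=
  ⟨fun h => Quotient.exact h, fun h => Quotient.sound h⟩

lemma PGS.continuous_mk : Continuous (Quotient.mk RA.setoid) :=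
  continuous_quot_mk

lemma PGS.continuous_act_right (h : H) : Continuous fun x : Γ => RA.act x h :=
  RA.continuous_act.comp (continuous_id.prodMk continuous_const)

lemma PGS.isOpenMap_mk : IsOpenMap (Quotient.mk RA.setoid) := by
  intro U hU
  rw [isOpen_coinduced]
  show IsOpen (Quotient.mk RA.setoid ⁻¹' (Quotient.mk RA.setoid '' U))
  have : Quotient.mk RA.setoid ⁻¹' (Quotient.mk RA.setoid '' U)
      = ⋃ h : H, (fun x : Γ => RA.act x h) ⁻¹' U := by
    ext x
    simp only [Set.mem_preimage, Set.mem_image, Set.mem_iUnion]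
    constructor
    · rintro ⟨y, hy, hyx⟩
      obtain ⟨h, rfl⟩ := (PGS.mk_eq_iff RA).mp hyx
      exact ⟨h⁻¹, by rwa [RA.act_mul, mul_inv_cancel, RA.act_one]⟩
    · rintro ⟨h, hx⟩
      exact ⟨RA.act x h, hx, ((PGS.mk_eq_iff RA).mpr ⟨h⁻¹, by
        rw [RA.act_mul, mul_inv_cancel, RA.act_one]⟩)⟩
  rw [this]
  exact isOpen_iUnion fun h => hU.preimage (PGS.continuous_act_right RA h)

lemma PGS.isClosed_rel (hproper : RA.Proper) :
    IsClosed {p : Γ × Γ | Quotient.mk RA.setoid p.1 = Quotient.mk RA.setoid p.2} := by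
  have hΦ : IsProperMap (fun p : Γ × H => (RA.act p.1 p.2, p.1)) := by
    refine isProperMap_iff_isCompact_preimage.mpr ⟨?_, fun K hK => hproper K hK⟩
    exact RA.continuous_act.prodMk continuous_fst
  have hrange : IsClosed (Set.range fun p : Γ × H => (RA.act p.1 p.2, p.1)) :=
    hΦ.isClosedMap.isClosed_range
  have : {p : Γ × Γ | Quotient.mk RA.setoid p.1 = Quotient.mk RA.setoid p.2}
      = Prod.swap ⁻¹' (Set.range fun p : Γ × H => (RA.act p.1 p.2, p.1)) := by
    ext ⟨a, b⟩
    simp only [Set.mem_setOf_eq, Set.mem_preimage, Set.mem_range, Prod.swap_prod_mk,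
      Prod.mk.injEq, PGS.mk_eq_iff RA]
    constructor
    · rintro ⟨h, rfl⟩; exact ⟨(a, h), rfl, rfl⟩
    · rintro ⟨⟨x, h⟩, hb, rfl⟩; exact ⟨h, hb⟩
  rw [this]
  exact hrange.preimage continuous_swap

lemma PGS.t2_quotient (hproper : RA.Proper) : T2Space (Quotient RA.setoid) := by
  rw [t2Space_iff]
  intro z w hzw
  obtain ⟨a, rfl⟩ := Quot.exists_rep z
  obtain ⟨b, rfl⟩ := Quot.exists_rep w
  have hab : (a, b) ∈ {p : Γ × Γ | Quotient.mk RA.setoid p.1 = Quotient.mk RA.setoid p.2}ᶜ :=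
    hzw
  obtain ⟨U, V, hU, hV, haU, hbV, hUV⟩ :=
    isOpen_prod_iff.mp (PGS.isClosed_rel RA hproper).isOpen_compl a b hab
  refine ⟨Quotient.mk RA.setoid '' U, Quotient.mk RA.setoid '' V,
    PGS.isOpenMap_mk RA U hU, PGS.isOpenMap_mk RA V hV, ⟨a, haU, rfl⟩, ⟨b, hbV, rfl⟩, ?_⟩
  rw [Set.disjoint_left]
  rintro _ ⟨u, hu, rfl⟩ ⟨v, hv, hvu⟩
  exact hUV (Set.mk_mem_prod hu hv) hvu.symm

lemma PGS.locallyCompact_quotient : LocallyCompactSpace (Quotient RA.setoid) := by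
  constructor
  intro z n hn
  obtain ⟨a, rfl⟩ := Quot.exists_rep z
  have hn' : Quotient.mk RA.setoid ⁻¹' n ∈ nhds a :=
    (PGS.continuous_mk RA).continuousAt.preimage_mem_nhds hn
  obtain ⟨s, hs_nhds, hs_sub, hs_comp⟩ := LocallyCompactSpace.local_compact_nhds a _ hn'
  refine ⟨Quotient.mk RA.setoid '' s, ?_, ?_, hs_comp.image (PGS.continuous_mk RA)⟩
  · refine mem_nhds_iff.mpr ?_
    exact ⟨Quotient.mk RA.setoid '' interior s,
      Set.image_mono interior_subset,
      PGS.isOpenMap_mk RA _ isOpen_interior,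
      ⟨a, mem_interior_iff_mem_nhds.mpr hs_nhds, rfl⟩⟩
  · rintro _ ⟨y, hy, rfl⟩
    exact hs_sub hy

lemma PGS.isClosed_unit : IsClosed 𝒢.unit := by
  have : 𝒢.unit = {x : Γ | 𝒢.rng x = x} := by
    ext x
    exact ⟨fun hx => 𝒢.rng_unit x hx, fun hx => hx ▸ 𝒢.rng_mem x⟩
  rw [this]
  exact isClosed_eq 𝒢.continuous_rng continuous_id

end PGSAux
/-- (Structure theorem.) A free and proper action of `H` on a groupoid
`Γ` exhibits `Γ` as the transformation groupoid `(Γ/H)*Γ⁰` for a canonical action of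
`Γ/H` on `Γ⁰` with `(xH)·s(x) = r(x)`, via the `H`-equivariant isomorphism
`θ(x) = (xH, s(x))`. -/
theorem principal_groupoid_structure_theorem
    {Γ H : Type*} [TopologicalSpace Γ] [T2Space Γ] [LocallyCompactSpace Γ]
    [TopologicalSpace H] [Group H] [IsTopologicalGroup H] [T2Space H] [LocallyCompactSpace H]
    (𝒢 : TopGroupoid Γ) (RA : GroupRightAction 𝒢 H)
    (hfree : RA.Free) (hproper : RA.Proper)
    (Q : TopGroupoid (Quotient RA.setoid))
    (hQunit : Q.unit = Quotient.mk RA.setoid '' 𝒢.unit)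
    (hQrng : ∀ x : Γ, Q.rng (Quotient.mk RA.setoid x) = Quotient.mk RA.setoid (𝒢.rng x))
    (hQsrc : ∀ x : Γ, Q.src (Quotient.mk RA.setoid x) = Quotient.mk RA.setoid (𝒢.src x))
    (hQmul : ∀ x y : Γ, 𝒢.src x = 𝒢.rng y →
      Q.mul (Quotient.mk RA.setoid x) (Quotient.mk RA.setoid y)
        = Quotient.mk RA.setoid (𝒢.mul x y))
    (hQinv : ∀ x : Γ, Q.inv (Quotient.mk RA.setoid x) = Quotient.mk RA.setoid (𝒢.inv x)) :
    (∃ B : GroupoidLeftAction Q {u : Γ // u ∈ 𝒢.unit},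
      (∀ u : {u : Γ // u ∈ 𝒢.unit}, B.ρ u = Quotient.mk RA.setoid u.val) ∧
      (∀ x : Γ, B.act (Quotient.mk RA.setoid x) ⟨𝒢.src x, 𝒢.src_mem x⟩
        = ⟨𝒢.rng x, 𝒢.rng_mem x⟩) ∧
      (∀ B' : GroupoidLeftAction Q {u : Γ // u ∈ 𝒢.unit},
        (∀ u : {u : Γ // u ∈ 𝒢.unit}, B'.ρ u = Quotient.mk RA.setoid u.val) →
        (∀ x : Γ, B'.act (Quotient.mk RA.setoid x) ⟨𝒢.src x, 𝒢.src_mem x⟩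
          = ⟨𝒢.rng x, 𝒢.rng_mem x⟩) →
        ∀ (z : Quotient RA.setoid) (u : {u : Γ // u ∈ 𝒢.unit}),
          Q.src z = Quotient.mk RA.setoid u.val → B'.act z u = B.act z u)) ∧
    (∃ θ : Γ ≃ₜ {p : Quotient RA.setoid × {u : Γ // u ∈ 𝒢.unit} //
        Q.src p.1 = Quotient.mk RA.setoid p.2.val},
      (∀ x : Γ, (θ x).val = (Quotient.mk RA.setoid x, ⟨𝒢.src x, 𝒢.src_mem x⟩)) ∧
      (∀ x y : Γ, 𝒢.src x = 𝒢.rng y →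
        (θ (𝒢.mul x y)).val
          = (Q.mul (Quotient.mk RA.setoid x) (Quotient.mk RA.setoid y),
              ⟨𝒢.src y, 𝒢.src_mem y⟩)) ∧
      (∀ (x : Γ) (h : H),
        (θ (RA.act x h)).val
          = (Quotient.mk RA.setoid x,
              ⟨RA.act (𝒢.src x) h, RA.unit_act _ (𝒢.src_mem x) h⟩))) := by
  classical
  haveI hT2Q : T2Space (Quotient RA.setoid) := PGS.t2_quotient RA hproper
  haveI hLCQ : LocallyCompactSpace (Quotient RA.setoid) := PGS.locallyCompact_quotient RA
  haveI hLCU : LocallyCompactSpace {u : Γ // u ∈ 𝒢.unit} :=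
    (PGS.isClosed_unit (𝒢 := 𝒢)).locallyCompactSpace
  -- the canonical map into the transformation groupoid
  let f : Γ → {p : Quotient RA.setoid × {u : Γ // u ∈ 𝒢.unit} //
      Q.src p.1 = Quotient.mk RA.setoid p.2.val} :=
    fun x => ⟨(Quotient.mk RA.setoid x, ⟨𝒢.src x, 𝒢.src_mem x⟩), hQsrc x⟩
  have hf_cont : Continuous f :=
    Continuous.subtype_mk
      ((PGS.continuous_mk RA).prodMk (𝒢.continuous_src.subtype_mk _)) _
  have hf_inj : Function.Injective f := by
    intro x y hxy
    have h1 : Quotient.mk RA.setoid x = Quotient.mk RA.setoid y :=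
      congrArg (fun p => p.val.1) hxy
    have h2 : 𝒢.src x = 𝒢.src y := congrArg (fun p => p.val.2.val) hxy
    obtain ⟨h, rfl⟩ := (PGS.mk_eq_iff RA).mp h1
    have h3 : RA.act (𝒢.src x) h = 𝒢.src x := by
      rw [← RA.src_act]; exact h2.symm
    rw [hfree _ _ h3, RA.act_one]
  have hf_surj : Function.Surjective f := by
    rintro ⟨⟨z, u⟩, hp⟩
    obtain ⟨x₀, rfl⟩ := @Quotient.exists_rep Γ RA.setoid z
    rw [hQsrc] at hp
    obtain ⟨h, hh⟩ := (PGS.mk_eq_iff RA).mp hp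
    refine ⟨RA.act x₀ h, Subtype.ext (Prod.ext ?_ (Subtype.ext ?_))⟩
    · exact (PGS.mk_eq_iff RA).mpr ⟨h⁻¹, by rw [RA.act_mul, mul_inv_cancel, RA.act_one]⟩
    · show 𝒢.src (RA.act x₀ h) = u.val
      rw [RA.src_act, hh]
  have hPclosed : IsClosed {p : Quotient RA.setoid × {u : Γ // u ∈ 𝒢.unit} |
      Q.src p.1 = Quotient.mk RA.setoid p.2.val} :=
    isClosed_eq (Q.continuous_src.comp continuous_fst)
      ((PGS.continuous_mk RA).comp (continuous_subtype_val.comp continuous_snd))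
  haveI : LocallyCompactSpace {p : Quotient RA.setoid × {u : Γ // u ∈ 𝒢.unit} //
      Q.src p.1 = Quotient.mk RA.setoid p.2.val} :=
    hPclosed.locallyCompactSpace
  -- preimages of compact sets are compact
  have hpre : ∀ K : Set {p : Quotient RA.setoid × {u : Γ // u ∈ 𝒢.unit} //
      Q.src p.1 = Quotient.mk RA.setoid p.2.val}, IsCompact K → IsCompact (f ⁻¹' K) := by
    intro K hK
    have hK1 : IsCompact ((fun p : {p : Quotient RA.setoid × {u : Γ // u ∈ 𝒢.unit} //
        Q.src p.1 = Quotient.mk RA.setoid p.2.val} => p.val.1) '' K) :=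
      hK.image (continuous_fst.comp continuous_subtype_val)
    have hK2 : IsCompact ((fun p : {p : Quotient RA.setoid × {u : Γ // u ∈ 𝒢.unit} //
        Q.src p.1 = Quotient.mk RA.setoid p.2.val} => p.val.2.val) '' K) :=
      hK.image (continuous_subtype_val.comp (continuous_snd.comp continuous_subtype_val))
    set K1 := (fun p : {p : Quotient RA.setoid × {u : Γ // u ∈ 𝒢.unit} //
        Q.src p.1 = Quotient.mk RA.setoid p.2.val} => p.val.1) '' K with hK1def
    set K2 := (fun p : {p : Quotient RA.setoid × {u : Γ // u ∈ 𝒢.unit} //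
        Q.src p.1 = Quotient.mk RA.setoid p.2.val} => p.val.2.val) '' K with hK2def
    -- cover K1 by the image of a compact set
    obtain ⟨C, hCcomp, hK1C⟩ : ∃ C : Set Γ, IsCompact C ∧ K1 ⊆ Quotient.mk RA.setoid '' C := by
      have hsec : ∀ z : Quotient RA.setoid, ∃ x : Γ, Quotient.mk RA.setoid x = z :=
        fun z => @Quotient.exists_rep Γ RA.setoid z
      choose sec hsec using hsec
      choose N hNcomp hNnhds using fun z : Quotient RA.setoid =>
        exists_compact_mem_nhds (sec z)
      have hU : ∀ z ∈ K1, Quotient.mk RA.setoid '' interior (N z) ∈ nhds z := by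
        intro z _
        have : z ∈ Quotient.mk RA.setoid '' interior (N z) :=
          ⟨sec z, mem_interior_iff_mem_nhds.mpr (hNnhds z), hsec z⟩
        exact (PGS.isOpenMap_mk RA _ isOpen_interior).mem_nhds this
      obtain ⟨t, -, hts⟩ := hK1.elim_nhds_subcover
        (fun z => Quotient.mk RA.setoid '' interior (N z)) hU
      refine ⟨⋃ z ∈ t, N z, t.finite_toSet.isCompact_biUnion fun z _ => hNcomp z, ?_⟩
      intro z hz
      obtain ⟨w, hw, hzw⟩ := Set.mem_iUnion₂.mp (hts hz)
      obtain ⟨y, hy, rfl⟩ := hzw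
      exact ⟨y, Set.mem_biUnion hw (interior_subset hy), rfl⟩
    set M := {p : Γ × H | (RA.act p.1 p.2, p.1) ∈ K2 ×ˢ (𝒢.src '' C)} with hMdef
    have hM : IsCompact M := hproper _ (hK2.prod (hCcomp.image 𝒢.continuous_src))
    have hL : IsCompact ((fun p : Γ × H => RA.act p.1 p.2) '' (C ×ˢ (Prod.snd '' M))) :=
      (hCcomp.prod (hM.image continuous_snd)).image RA.continuous_act
    refine (hL.of_isClosed_subset (hK.isClosed.preimage hf_cont) ?_)
    intro x hx
    have h1 : Quotient.mk RA.setoid x ∈ K1 := ⟨f x, hx, rfl⟩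
    have h2 : 𝒢.src x ∈ K2 := ⟨f x, hx, rfl⟩
    obtain ⟨c, hc, hcx⟩ := hK1C h1
    obtain ⟨h, rfl⟩ := (PGS.mk_eq_iff RA).mp hcx
    have hmem : (𝒢.src c, h) ∈ M := by
      refine Set.mk_mem_prod ?_ ⟨c, hc, rfl⟩
      rw [← RA.src_act]
      exact h2
    exact ⟨(c, h), Set.mk_mem_prod hc ⟨(𝒢.src c, h), hmem, rfl⟩, rfl⟩
  have hf_proper : IsProperMap f :=
    isProperMap_iff_isCompact_preimage.mpr ⟨hf_cont, fun K hK => hpre K hK⟩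
  have hf_open : IsOpenMap f := by
    intro U hU
    have hcl := hf_proper.isClosedMap Uᶜ hU.isClosed_compl
    rw [← compl_compl (f '' U), ← Set.image_compl_eq ⟨hf_inj, hf_surj⟩]
    exact hcl.isOpen_compl
  let θ : Γ ≃ₜ {p : Quotient RA.setoid × {u : Γ // u ∈ 𝒢.unit} //
      Q.src p.1 = Quotient.mk RA.setoid p.2.val} :=
    Equiv.toHomeomorphOfContinuousOpen (Equiv.ofBijective f ⟨hf_inj, hf_surj⟩)
      hf_cont hf_open
  have hθval : ∀ x : Γ,
      (θ x).val = (Quotient.mk RA.setoid x, ⟨𝒢.src x, 𝒢.src_mem x⟩) := fun x => rfl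
  have hsymm1 : ∀ p, Quotient.mk RA.setoid (θ.symm p) = p.val.1 :=
    fun p => congrArg (fun r => r.val.1) (θ.apply_symm_apply p)
  have hsymm2 : ∀ p, 𝒢.src (θ.symm p) = p.val.2.val :=
    fun p => congrArg (fun r => r.val.2.val) (θ.apply_symm_apply p)
  have hθsymm_eq : ∀ (x : Γ) p,
      p.val = (Quotient.mk RA.setoid x, ⟨𝒢.src x, 𝒢.src_mem x⟩) → θ.symm p = x := by
    intro x p hp
    apply θ.injective
    rw [θ.apply_symm_apply]
    exact Subtype.ext (hp.trans (hθval x).symm)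
  -- the action of the quotient groupoid on the unit space
  let Bact : Quotient RA.setoid → {u : Γ // u ∈ 𝒢.unit} → {u : Γ // u ∈ 𝒢.unit} :=
    fun z u =>
      if h : Q.src z = Quotient.mk RA.setoid u.val then
        ⟨𝒢.rng (θ.symm ⟨(z, u), h⟩), 𝒢.rng_mem _⟩
      else u
  have hBact : ∀ z u (h : Q.src z = Quotient.mk RA.setoid u.val),
      Bact z u = ⟨𝒢.rng (θ.symm ⟨(z, u), h⟩), 𝒢.rng_mem _⟩ := fun z u h => dif_pos h
  have hBgen : ∀ x : Γ, Bact (Quotient.mk RA.setoid x) ⟨𝒢.src x, 𝒢.src_mem x⟩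
      = ⟨𝒢.rng x, 𝒢.rng_mem x⟩ := by
    intro x
    rw [hBact _ _ (hQsrc x)]
    exact Subtype.ext (by rw [hθsymm_eq x _ rfl])
  let B : GroupoidLeftAction Q {u : Γ // u ∈ 𝒢.unit} :=
    { ρ := fun u => Quotient.mk RA.setoid u.val
      act := Bact
      ρ_mem := fun u => by rw [hQunit]; exact ⟨u.val, u.prop, rfl⟩
      continuous_ρ := (PGS.continuous_mk RA).comp continuous_subtype_val
      ρ_surj := by
        intro v hv
        rw [hQunit] at hv
        obtain ⟨w, hw, rfl⟩ := hv
        exact ⟨⟨w, hw⟩, rfl⟩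
      open_ρ := by
        intro U hU
        obtain ⟨W, hW, hWU⟩ := isOpen_induced_iff.mp hU
        refine ⟨Quotient.mk RA.setoid '' W, PGS.isOpenMap_mk RA W hW, ?_⟩
        have himg : (fun u : {u : Γ // u ∈ 𝒢.unit} => Quotient.mk RA.setoid u.val) '' U
            = Quotient.mk RA.setoid '' (𝒢.unit ∩ W) := by
          rw [← hWU, ← Subtype.image_preimage_coe, ← Set.image_comp]
          rfl
        rw [himg]
        ext z
        constructor
        · rintro ⟨w, ⟨hwu, hwW⟩, rfl⟩
          exact ⟨⟨w, hwW, rfl⟩, by rw [hQunit]; exact ⟨w, hwu, rfl⟩⟩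
        · rintro ⟨⟨w, hwW, rfl⟩, hz⟩
          rw [hQunit] at hz
          obtain ⟨u', hu', hqu⟩ := hz
          obtain ⟨h, rfl⟩ := (PGS.mk_eq_iff RA).mp hqu
          exact ⟨RA.act u' h, ⟨RA.unit_act u' hu' h, hwW⟩, rfl⟩
      continuous_act := by
        rw [continuousOn_iff_continuous_restrict]
        have heq : Set.domRestrict {p : Quotient RA.setoid × {u : Γ // u ∈ 𝒢.unit} |
              Q.src p.1 = Quotient.mk RA.setoid p.2.val} (fun p => Bact p.1 p.2)
            = fun p => ⟨𝒢.rng (θ.symm ⟨p.val, p.prop⟩), 𝒢.rng_mem _⟩ := by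
          funext p
          exact hBact p.val.1 p.val.2 p.prop
        rw [heq]
        exact Continuous.subtype_mk
          (𝒢.continuous_rng.comp (θ.symm.continuous.comp
            (Continuous.subtype_mk continuous_subtype_val _))) _
      ρ_act := by
        intro z u h
        rw [hBact z u h]
        show Quotient.mk RA.setoid (𝒢.rng (θ.symm ⟨(z, u), h⟩)) = Q.rng z
        rw [← hQrng, hsymm1]
      unit_act := by
        intro u
        have h : Q.src (Quotient.mk RA.setoid u.val) = Quotient.mk RA.setoid u.val := by
          rw [hQsrc, 𝒢.src_unit u.val u.prop]
        show Bact (Quotient.mk RA.setoid u.val) u = u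
        rw [hBact _ _ h]
        have hx : θ.symm ⟨(Quotient.mk RA.setoid u.val, u), h⟩ = u.val :=
          hθsymm_eq u.val _ (Prod.ext rfl (Subtype.ext (𝒢.src_unit u.val u.prop).symm))
        apply Subtype.ext
        show 𝒢.rng (θ.symm ⟨(Quotient.mk RA.setoid u.val, u), h⟩) = u.val
        rw [hx, 𝒢.rng_unit u.val u.prop]
      act_act := by
        intro z₁ z₂ u h2 h12
        show Bact z₁ (Bact z₂ u) = Bact (Q.mul z₁ z₂) u
        replace h2 : Q.src z₂ = Quotient.mk RA.setoid u.val := h2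
        set x₂ := θ.symm ⟨(z₂, u), h2⟩ with hx₂def
        have hq₂ : Quotient.mk RA.setoid x₂ = z₂ := hsymm1 _
        have hs₂ : 𝒢.src x₂ = u.val := hsymm2 _
        have e2 : Bact z₂ u = ⟨𝒢.rng x₂, 𝒢.rng_mem _⟩ := hBact z₂ u h2
        rw [e2]
        have h1 : Q.src z₁ = Quotient.mk RA.setoid (𝒢.rng x₂) := by
          rw [h12, ← hq₂, hQrng]
        set x₁ := θ.symm ⟨(z₁, ⟨𝒢.rng x₂, 𝒢.rng_mem _⟩), h1⟩ with hx₁def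
        have hq₁ : Quotient.mk RA.setoid x₁ = z₁ := hsymm1 _
        have hs₁ : 𝒢.src x₁ = 𝒢.rng x₂ := hsymm2 _
        have e1 : Bact z₁ ⟨𝒢.rng x₂, 𝒢.rng_mem _⟩ = ⟨𝒢.rng x₁, 𝒢.rng_mem _⟩ :=
          hBact z₁ _ h1
        rw [e1]
        have hmul : Q.mul z₁ z₂ = Quotient.mk RA.setoid (𝒢.mul x₁ x₂) := by
          rw [← hq₁, ← hq₂, hQmul x₁ x₂ hs₁]
        have h3 : Q.src (Q.mul z₁ z₂) = Quotient.mk RA.setoid u.val := by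
          rw [hmul, hQsrc, 𝒢.src_mul x₁ x₂ hs₁, hs₂]
        have e3 : Bact (Q.mul z₁ z₂) u
            = ⟨𝒢.rng (θ.symm ⟨(Q.mul z₁ z₂, u), h3⟩), 𝒢.rng_mem _⟩ := hBact _ u h3
        rw [e3]
        have hx3 : θ.symm ⟨(Q.mul z₁ z₂, u), h3⟩ = 𝒢.mul x₁ x₂ :=
          hθsymm_eq _ _ (Prod.ext hmul
            (Subtype.ext (by
              show (u : Γ) = 𝒢.src (𝒢.mul x₁ x₂)
              rw [𝒢.src_mul x₁ x₂ hs₁, hs₂])))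
        apply Subtype.ext
        show 𝒢.rng x₁ = 𝒢.rng (θ.symm ⟨(Q.mul z₁ z₂, u), h3⟩)
        rw [hx3, 𝒢.rng_mul x₁ x₂ hs₁]
    }
  refine ⟨⟨B, fun u => rfl, hBgen, ?_⟩, θ, hθval, ?_, ?_⟩
  · -- uniqueness
    intro B' hρ' hgen' z u h
    have hqx : Quotient.mk RA.setoid (θ.symm ⟨(z, u), h⟩) = z := hsymm1 _
    have hsx : 𝒢.src (θ.symm ⟨(z, u), h⟩) = u.val := hsymm2 _
    have hu : u = ⟨𝒢.src (θ.symm ⟨(z, u), h⟩), 𝒢.src_mem _⟩ := Subtype.ext hsx.symm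
    calc B'.act z u = B'.act (Quotient.mk RA.setoid (θ.symm ⟨(z, u), h⟩))
          ⟨𝒢.src (θ.symm ⟨(z, u), h⟩), 𝒢.src_mem _⟩ := by rw [hqx, ← hu]
      _ = ⟨𝒢.rng (θ.symm ⟨(z, u), h⟩), 𝒢.rng_mem _⟩ := hgen' _
      _ = Bact (Quotient.mk RA.setoid (θ.symm ⟨(z, u), h⟩))
          ⟨𝒢.src (θ.symm ⟨(z, u), h⟩), 𝒢.src_mem _⟩ := (hBgen _).symm
      _ = B.act z u := by rw [hqx, ← hu]
  · -- multiplicativity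
    intro x y hxy
    rw [hθval]
    exact Prod.ext (hQmul x y hxy).symm (Subtype.ext (𝒢.src_mul x y hxy))
  · -- equivariance
    intro x h
    rw [hθval]
    refine Prod.ext ?_ (Subtype.ext (RA.src_act x h))
    exact ((PGS.mk_eq_iff RA).mpr ⟨h, rfl⟩).symm
end

section
/- Let H be a locally compact Hausdorff topological group acting freely and properly on the right of a topological groupoid Γ by automorphisms. Then the quotient groupoid Γ/H acts on the left of the space Γ, with fibre map ρ : Γ → Γ⁰/H given by ρ(y) = r(y)·H, via (xH)·y = xy whenever s(x) = r(y). In particular: this formula is well defined (if x' ∈ xH satisfies s(x') = r(y') for y' = y, the product is unchanged as required by the definition of a groupoid action), ρ is continuous and open, ρ((xH)·y) = r(xH), units act trivially, the action is compatible with the multiplication of Γ/H, and the action map is continuous. -/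
open MeasureTheory Filter Topology

section Statement11Aux

open Set Filter

set_option linter.unusedSectionVars false

variable {Γ H : Type*} [TopologicalSpace Γ] [T2Space Γ] [LocallyCompactSpace Γ]
  [TopologicalSpace H] [Group H] [IsTopologicalGroup H] [T2Space H] [LocallyCompactSpace H]
  {𝒢 : TopGroupoid Γ}

open scoped Classical in
/-- The translation function: `tauFn RA a b` is an `h` with `a·h = b`, if one exists. -/
noncomputable def tauFn (RA : GroupRightAction 𝒢 H) (a b : Γ) : H :=
  if hp : ∃ h : H, RA.act a h = b then hp.choose else 1

lemma tauFn_spec (RA : GroupRightAction 𝒢 H) {a b : Γ} (hp : ∃ h : H, RA.act a h = b) :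
    RA.act a (tauFn RA a b) = b := by
  rw [tauFn, dif_pos hp]; exact hp.choose_spec

lemma act_right_injective (RA : GroupRightAction 𝒢 H) (hfree : RA.Free) {a : Γ} {h k : H}
    (e : RA.act a h = RA.act a k) : h = k := by
  have h1 : RA.act a (h * k⁻¹) = a := by
    rw [← RA.act_mul, e, RA.act_mul, mul_inv_cancel, RA.act_one]
  have h2 := hfree a _ h1
  rwa [mul_inv_eq_one] at h2

/-- For a free and proper action, the translation function is continuous on the orbit
relation. -/
lemma tauFn_continuousOn (RA : GroupRightAction 𝒢 H) (hfree : RA.Free) (hproper : RA.Proper) :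
    ContinuousOn (fun p : Γ × Γ => tauFn RA p.1 p.2)
      {p : Γ × Γ | ∃ h : H, RA.act p.1 h = p.2} := by
  intro p₀ hp₀
  obtain ⟨K1, hK1c, hK1⟩ := exists_compact_mem_nhds p₀.1
  obtain ⟨K2, hK2c, hK2⟩ := exists_compact_mem_nhds p₀.2
  have hC : IsCompact {q : Γ × H | (RA.act q.1 q.2, q.1) ∈ K2 ×ˢ K1} :=
    hproper _ (hK2c.prod hK1c)
  refine tendsto_nhds.mpr fun U hUo hUm => ?_
  set φ : Γ × H → Γ × Γ := fun q => (q.1, RA.act q.1 q.2) with hφdef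
  have hφ : Continuous φ := continuous_fst.prodMk RA.continuous_act
  set C' : Set (Γ × H) :=
    {q : Γ × H | (RA.act q.1 q.2, q.1) ∈ K2 ×ˢ K1} ∩ Prod.snd ⁻¹' Uᶜ with hC'def
  have hC' : IsCompact C' := hC.inter_right (hUo.isClosed_compl.preimage continuous_snd)
  have himg : IsCompact (φ '' C') := hC'.image hφ
  have hp₀notin : p₀ ∉ φ '' C' := by
    rintro ⟨⟨a, h⟩, ⟨-, hnotU⟩, heq⟩
    apply hnotU
    have ha : a = p₀.1 := congrArg Prod.fst heq
    have hb : RA.act a h = p₀.2 := congrArg Prod.snd heq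
    subst ha
    have hk := act_right_injective RA hfree (hb.trans (tauFn_spec RA hp₀).symm)
    simpa [hk] using hUm
  have hN : (φ '' C')ᶜ ∈ 𝓝 p₀ := himg.isClosed.isOpen_compl.mem_nhds hp₀notin
  have hM : ((φ '' C')ᶜ ∩ K1 ×ˢ K2) ∈ 𝓝 p₀ := inter_mem hN (prod_mem_nhds hK1 hK2)
  filter_upwards [mem_nhdsWithin_of_mem_nhds hM, self_mem_nhdsWithin] with p hpM hpR
  by_contra hnot
  have hpC' : (p.1, tauFn RA p.1 p.2) ∈ C' := by
    refine ⟨⟨?_, hpM.2.1⟩, hnot⟩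
    rw [tauFn_spec RA hpR]; exact hpM.2.2
  exact hpM.1 ⟨_, hpC', by rw [hφdef]; simp only [tauFn_spec RA hpR]⟩

open scoped Classical in
/-- The action of a representative on the total space. -/
noncomputable def actAux (𝒢 : TopGroupoid Γ) (RA : GroupRightAction 𝒢 H) (x y : Γ) : Γ :=
  if ∃ h : H, RA.act (𝒢.src x) h = 𝒢.rng y then
    𝒢.mul (RA.act x (tauFn RA (𝒢.src x) (𝒢.rng y))) y
  else y

lemma actAux_pos (𝒢 : TopGroupoid Γ) (RA : GroupRightAction 𝒢 H) {x y : Γ}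
    (hp : ∃ h : H, RA.act (𝒢.src x) h = 𝒢.rng y) :
    actAux 𝒢 RA x y = 𝒢.mul (RA.act x (tauFn RA (𝒢.src x) (𝒢.rng y))) y := by
  rw [actAux, if_pos hp]

lemma actAux_neg (𝒢 : TopGroupoid Γ) (RA : GroupRightAction 𝒢 H) {x y : Γ}
    (hp : ¬ ∃ h : H, RA.act (𝒢.src x) h = 𝒢.rng y) :
    actAux 𝒢 RA x y = y := by
  rw [actAux, if_neg hp]

lemma src_act_tau (𝒢 : TopGroupoid Γ) (RA : GroupRightAction 𝒢 H) {x y : Γ}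
    (hp : ∃ h : H, RA.act (𝒢.src x) h = 𝒢.rng y) :
    𝒢.src (RA.act x (tauFn RA (𝒢.src x) (𝒢.rng y))) = 𝒢.rng y := by
  rw [RA.src_act, tauFn_spec RA hp]

lemma actAux_act (𝒢 : TopGroupoid Γ) (RA : GroupRightAction 𝒢 H) (hfree : RA.Free)
    (x y : Γ) (h : H) : actAux 𝒢 RA (RA.act x h) y = actAux 𝒢 RA x y := by
  by_cases hp : ∃ k : H, RA.act (𝒢.src x) k = 𝒢.rng y
  · have hp2 : ∃ k : H, RA.act (𝒢.src (RA.act x h)) k = 𝒢.rng y := by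
      obtain ⟨k, hk⟩ := hp
      refine ⟨h⁻¹ * k, ?_⟩
      rw [RA.src_act, RA.act_mul, mul_inv_cancel_left]
      exact hk
    have key : RA.act (RA.act x h) (tauFn RA (𝒢.src (RA.act x h)) (𝒢.rng y))
        = RA.act x (tauFn RA (𝒢.src x) (𝒢.rng y)) := by
      have h1 := tauFn_spec RA hp2
      rw [RA.src_act, RA.act_mul] at h1
      have h2 := tauFn_spec RA hp
      have h3 := act_right_injective RA hfree (h1.trans h2.symm)
      rw [RA.act_mul, RA.src_act, h3]
    rw [actAux_pos 𝒢 RA hp2, actAux_pos 𝒢 RA hp, key]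
  · have hp2 : ¬ ∃ k : H, RA.act (𝒢.src (RA.act x h)) k = 𝒢.rng y := by
      rintro ⟨k, hk⟩
      rw [RA.src_act, RA.act_mul] at hk
      exact hp ⟨h * k, hk⟩
    rw [actAux_neg 𝒢 RA hp2, actAux_neg 𝒢 RA hp]

lemma actAux_continuousOn (𝒢 : TopGroupoid Γ) (RA : GroupRightAction 𝒢 H)
    (hfree : RA.Free) (hproper : RA.Proper) :
    ContinuousOn (fun p : Γ × Γ => actAux 𝒢 RA p.1 p.2)
      {p : Γ × Γ | ∃ h : H, RA.act (𝒢.src p.1) h = 𝒢.rng p.2} := by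
  set T : Set (Γ × Γ) := {p : Γ × Γ | ∃ h : H, RA.act (𝒢.src p.1) h = 𝒢.rng p.2} with hT
  have hsr : Continuous (fun p : Γ × Γ => (𝒢.src p.1, 𝒢.rng p.2)) :=
    (𝒢.continuous_src.comp continuous_fst).prodMk (𝒢.continuous_rng.comp continuous_snd)
  have htau : ContinuousOn (fun p : Γ × Γ => tauFn RA (𝒢.src p.1) (𝒢.rng p.2)) T :=
    (tauFn_continuousOn RA hfree hproper).comp hsr.continuousOn (fun p hp => hp)
  have hg : ContinuousOn (fun p : Γ × Γ => RA.act p.1 (tauFn RA (𝒢.src p.1) (𝒢.rng p.2))) T :=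
    RA.continuous_act.comp_continuousOn (continuousOn_fst.prodMk htau)
  have hmul : ContinuousOn
      (fun p : Γ × Γ => 𝒢.mul (RA.act p.1 (tauFn RA (𝒢.src p.1) (𝒢.rng p.2))) p.2) T := by
    refine 𝒢.continuous_mul.comp (hg.prodMk continuousOn_snd) (fun p hp => ?_)
    exact src_act_tau 𝒢 RA hp
  exact hmul.congr (fun p hp => actAux_pos 𝒢 RA hp)

lemma isOpenMap_quot_mk (RA : GroupRightAction 𝒢 H) :
    IsOpenMap (Quotient.mk RA.setoid) := by
  intro W hW
  have hpre : Quotient.mk RA.setoid ⁻¹' (Quotient.mk RA.setoid '' W)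
      = ⋃ h : H, (fun x => RA.act x h) ⁻¹' W := by
    ext x
    simp only [Set.mem_preimage, Set.mem_image, Set.mem_iUnion]
    constructor
    · rintro ⟨w, hw, hq⟩
      obtain ⟨h, rfl⟩ := Quotient.exact hq
      refine ⟨h⁻¹, ?_⟩
      show RA.act (RA.act w h) h⁻¹ ∈ W
      rw [RA.act_mul, mul_inv_cancel, RA.act_one]
      exact hw
    · rintro ⟨h, hh⟩
      refine ⟨RA.act x h, hh, Quotient.sound ?_⟩
      refine ⟨h⁻¹, ?_⟩
      rw [RA.act_mul, mul_inv_cancel, RA.act_one]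
  have : IsOpen (Quotient.mk RA.setoid ⁻¹' (Quotient.mk RA.setoid '' W)) := by
    rw [hpre]
    refine isOpen_iUnion fun h => ?_
    exact hW.preimage (RA.continuous_act.comp (continuous_id.prodMk continuous_const))
  exact isOpen_coinduced.mpr this

end Statement11Aux

/-- The quotient groupoid `Γ/H` acts on the left of the space `Γ`, with
fibre map `ρ(y) = r(y)·H`, via `(xH)·y = xy` whenever `s(x) = r(y)`. -/
theorem quotient_groupoid_acts_on_total_space
    {Γ H : Type*} [TopologicalSpace Γ] [T2Space Γ] [LocallyCompactSpace Γ]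
    [TopologicalSpace H] [Group H] [IsTopologicalGroup H] [T2Space H] [LocallyCompactSpace H]
    (𝒢 : TopGroupoid Γ) (RA : GroupRightAction 𝒢 H)
    (hfree : RA.Free) (hproper : RA.Proper)
    (Q : TopGroupoid (Quotient RA.setoid))
    (hQunit : Q.unit = Quotient.mk RA.setoid '' 𝒢.unit)
    (hQrng : ∀ x : Γ, Q.rng (Quotient.mk RA.setoid x) = Quotient.mk RA.setoid (𝒢.rng x))
    (hQsrc : ∀ x : Γ, Q.src (Quotient.mk RA.setoid x) = Quotient.mk RA.setoid (𝒢.src x))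
    (hQmul : ∀ x y : Γ, 𝒢.src x = 𝒢.rng y →
      Q.mul (Quotient.mk RA.setoid x) (Quotient.mk RA.setoid y)
        = Quotient.mk RA.setoid (𝒢.mul x y))
    (hQinv : ∀ x : Γ, Q.inv (Quotient.mk RA.setoid x) = Quotient.mk RA.setoid (𝒢.inv x)) :
    ∃ B : GroupoidLeftAction Q Γ,
      (∀ y : Γ, B.ρ y = Quotient.mk RA.setoid (𝒢.rng y)) ∧
      (∀ x y : Γ, 𝒢.src x = 𝒢.rng y →
        B.act (Quotient.mk RA.setoid x) y = 𝒢.mul x y) := by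
  classical
  refine ⟨{ ρ := fun y => Quotient.mk RA.setoid (𝒢.rng y)
            act := fun q y => Quotient.liftOn q (fun x => actAux 𝒢 RA x y)
              (fun a b hab => by
                obtain ⟨h, rfl⟩ := hab
                exact (actAux_act 𝒢 RA hfree a y h).symm)
            ρ_mem := fun y => by
              rw [hQunit]; exact ⟨𝒢.rng y, 𝒢.rng_mem y, rfl⟩
            continuous_ρ := continuous_quot_mk.comp 𝒢.continuous_rng
            ρ_surj := fun v hv => by
              rw [hQunit] at hv
              obtain ⟨u, hu, rfl⟩ := hv
              refine ⟨u, ?_⟩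
              show Quotient.mk RA.setoid (𝒢.rng u) = _
              rw [𝒢.rng_unit u hu]
            open_ρ := fun U hU => by
              obtain ⟨W, hWo, hWU⟩ := 𝒢.open_rng U hU
              refine ⟨Quotient.mk RA.setoid '' W, isOpenMap_quot_mk RA W hWo, ?_⟩
              rw [hQunit]
              ext q
              constructor
              · rintro ⟨y, hy, rfl⟩
                have h1 : 𝒢.rng y ∈ W ∩ 𝒢.unit := by rw [← hWU]; exact ⟨y, hy, rfl⟩
                exact ⟨⟨_, h1.1, rfl⟩, _, h1.2, rfl⟩
              · rintro ⟨⟨w, hw, hq⟩, u, hu, rfl⟩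
                obtain ⟨h, rfl⟩ := Quotient.exact hq
                have hwu : w ∈ 𝒢.unit := by
                  have he : w = RA.act (RA.act w h) h⁻¹ := by
                    rw [RA.act_mul, mul_inv_cancel, RA.act_one]
                  rw [he]; exact RA.unit_act _ hu h⁻¹
                have h2 : w ∈ 𝒢.rng '' U := by rw [hWU]; exact ⟨hw, hwu⟩
                obtain ⟨y, hy, hwy⟩ := h2
                refine ⟨y, hy, ?_⟩
                show Quotient.mk RA.setoid (𝒢.rng y) = _
                rw [hwy]
                exact Quotient.sound ⟨h, rfl⟩
            continuous_act := by
              rintro ⟨q, y⟩ hp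
              obtain ⟨x, rfl⟩ := q.exists_rep
              rw [Set.mem_setOf_eq, hQsrc] at hp
              have hp' : ∃ h : H, RA.act (𝒢.src x) h = 𝒢.rng y := Quotient.exact hp
              have hF := actAux_continuousOn 𝒢 RA hfree hproper (x, y) hp'
              refine tendsto_nhds.mpr fun U hUo hUm => ?_
              have hEv := tendsto_nhds.mp hF U hUo hUm
              obtain ⟨O, hOo, hOm, hOsub⟩ := mem_nhdsWithin.mp hEv
              have hopen : IsOpenMap (fun p : Γ × Γ => (Quotient.mk RA.setoid p.1, p.2)) :=
                (isOpenMap_quot_mk RA).prodMap IsOpenMap.id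
              refine mem_nhdsWithin.mpr
                ⟨(fun p : Γ × Γ => (Quotient.mk RA.setoid p.1, p.2)) '' O, hopen O hOo,
                  ⟨(x, y), hOm, rfl⟩, ?_⟩
              rintro p ⟨⟨⟨x', y'⟩, hO, rfl⟩, hS⟩
              change Q.src (Quotient.mk RA.setoid x') = Quotient.mk RA.setoid (𝒢.rng y') at hS
              rw [hQsrc] at hS
              have hT : (x', y') ∈ {p : Γ × Γ | ∃ h : H, RA.act (𝒢.src p.1) h = 𝒢.rng p.2} :=
                Quotient.exact hS
              exact hOsub ⟨hO, hT⟩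
            ρ_act := fun q y hq => by
              obtain ⟨x, rfl⟩ := q.exists_rep
              rw [hQsrc] at hq
              have hp : ∃ h : H, RA.act (𝒢.src x) h = 𝒢.rng y := Quotient.exact hq
              show Quotient.mk RA.setoid (𝒢.rng (actAux 𝒢 RA x y)) = _
              rw [actAux_pos 𝒢 RA hp, 𝒢.rng_mul _ _ (src_act_tau 𝒢 RA hp), RA.rng_act, hQrng]
              refine (Quotient.sound ?_).symm
              exact ⟨tauFn RA (𝒢.src x) (𝒢.rng y), rfl⟩
            unit_act := fun y => by
              show actAux 𝒢 RA (𝒢.rng y) y = y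
              have hs : 𝒢.src (𝒢.rng y) = 𝒢.rng y := 𝒢.src_unit _ (𝒢.rng_mem y)
              have hp : ∃ h : H, RA.act (𝒢.src (𝒢.rng y)) h = 𝒢.rng y :=
                ⟨1, by rw [RA.act_one, hs]⟩
              have h1 : tauFn RA (𝒢.src (𝒢.rng y)) (𝒢.rng y) = 1 := by
                apply hfree (𝒢.src (𝒢.rng y))
                rw [tauFn_spec RA hp]
                exact hs.symm
              rw [actAux_pos 𝒢 RA hp, h1, RA.act_one, 𝒢.rng_mul_self]
            act_act := fun q q' y h1 h2 => by
              obtain ⟨x, rfl⟩ := q.exists_rep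
              obtain ⟨x', rfl⟩ := q'.exists_rep
              rw [hQsrc] at h1
              rw [hQsrc, hQrng] at h2
              have hr1 : ∃ h : H, RA.act (𝒢.src x') h = 𝒢.rng y := Quotient.exact h1
              have hr2 : ∃ h : H, RA.act (𝒢.src x) h = 𝒢.rng x' := Quotient.exact h2
              have hstep1 : actAux 𝒢 RA x' y
                  = 𝒢.mul (RA.act x' (tauFn RA (𝒢.src x') (𝒢.rng y))) y :=
                actAux_pos 𝒢 RA hr1
              set τ' := tauFn RA (𝒢.src x') (𝒢.rng y) with hτ'
              set z' := RA.act x' τ' with hz'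
              have hsz' : 𝒢.src z' = 𝒢.rng y := src_act_tau 𝒢 RA hr1
              set w := 𝒢.mul z' y with hw
              have hrw : 𝒢.rng w = RA.act (𝒢.rng x') τ' := by
                rw [hw, 𝒢.rng_mul _ _ hsz', hz', RA.rng_act]
              have hr3 : ∃ h : H, RA.act (𝒢.src x) h = 𝒢.rng w := by
                obtain ⟨k, hk⟩ := hr2
                exact ⟨k * τ', by rw [← RA.act_mul, hk, hrw]⟩
              have hstep2 : actAux 𝒢 RA x w
                  = 𝒢.mul (RA.act x (tauFn RA (𝒢.src x) (𝒢.rng w))) w :=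
                actAux_pos 𝒢 RA hr3
              set τ := tauFn RA (𝒢.src x) (𝒢.rng w) with hτ
              set z := RA.act x τ with hz
              have hsz : 𝒢.src z = 𝒢.rng w := src_act_tau 𝒢 RA hr3
              have hszz' : 𝒢.src z = 𝒢.rng z' := by rw [hsz, hrw, hz', RA.rng_act]
              have e1 : Quotient.mk RA.setoid x = Quotient.mk RA.setoid z :=
                Quotient.sound ⟨τ, hz.symm⟩
              have e2 : Quotient.mk RA.setoid x' = Quotient.mk RA.setoid z' :=
                Quotient.sound ⟨τ', hz'.symm⟩
              have hs4 : 𝒢.src (𝒢.mul z z') = 𝒢.rng y := by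
                rw [𝒢.src_mul _ _ hszz', hsz']
              have hp4 : ∃ h : H, RA.act (𝒢.src (𝒢.mul z z')) h = 𝒢.rng y :=
                ⟨1, by rw [RA.act_one, hs4]⟩
              have hτ4 : tauFn RA (𝒢.src (𝒢.mul z z')) (𝒢.rng y) = 1 := by
                apply hfree (𝒢.src (𝒢.mul z z'))
                rw [tauFn_spec RA hp4]
                exact hs4.symm
              have key : Q.mul (Quotient.mk RA.setoid x) (Quotient.mk RA.setoid x')
                  = Quotient.mk RA.setoid (𝒢.mul z z') := by
                rw [e1, e2]; exact hQmul z z' hszz'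
              have hrhs : actAux 𝒢 RA (𝒢.mul z z') y = 𝒢.mul z w := by
                rw [actAux_pos 𝒢 RA hp4, hτ4, RA.act_one,
                  𝒢.mul_assoc' z z' y hszz' hsz', ← hw]
              rw [key]
              show actAux 𝒢 RA x (actAux 𝒢 RA x' y) = actAux 𝒢 RA (𝒢.mul z z') y
              rw [hstep1, hstep2, hrhs]
            }, fun y => rfl, fun x y hxy => ?_⟩
  show actAux 𝒢 RA x y = 𝒢.mul x y
  have hp : ∃ h : H, RA.act (𝒢.src x) h = 𝒢.rng y := ⟨1, by rw [RA.act_one, hxy]⟩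
  have h1 : tauFn RA (𝒢.src x) (𝒢.rng y) = 1 := by
    apply hfree (𝒢.src x)
    rw [tauFn_spec RA hp]
    exact hxy.symm
  rw [actAux_pos 𝒢 RA hp, h1, RA.act_one]
end
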